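/- Let H be a (real or complex) Hilbert space, let (g_m)_{m∈ℕ} be a sequence in H, and let C ≥ 0. Suppose that for every finite subset F ⊆ ℕ and every choice of signs ε : F → {−1, +1} one has ‖ Σ_{m∈F} ε_m g_m ‖ ≤ C. Then the partial sums Σ_{m=0}^{N} g_m form a Cauchy sequence, i.e., the series Σ_{m∈ℕ} g_m converges in H. -/

import Mathlib

open scoped BigOperators

lemma sign_lemma {𝕜 : Type*} [RCLike 𝕜] {H : Type*} [NormedAddCommGroup H]
    [InnerProductSpace 𝕜 H] (K : ℕ) (h : ℕ → H) :
    ∃ ε : ℕ → 𝕜, (∀ m, ε m = 1 ∨ ε m = -1) ∧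
      ∑ k ∈ Finset.range K, ‖h k‖ ^ 2 ≤ ‖∑ k ∈ Finset.range K, ε k • h k‖ ^ 2 := by
  induction K with
  | zero => exact ⟨fun _ => 1, fun _ => Or.inl rfl, by simp⟩
  | succ K ih =>
    obtain ⟨ε, hε, hle⟩ := ih
    set s := ∑ k ∈ Finset.range K, ε k • h k with hs
    have par := parallelogram_law_with_norm 𝕜 s (h K)
    have key : ‖s‖ ^ 2 + ‖h K‖ ^ 2 ≤ ‖s + h K‖ ^ 2 ∨
        ‖s‖ ^ 2 + ‖h K‖ ^ 2 ≤ ‖s - h K‖ ^ 2 := by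
      by_contra hcon
      push_neg at hcon
      nlinarith [hcon.1, hcon.2]
    rcases key with hk | hk
    · refine ⟨fun m => if m = K then 1 else ε m, fun m => ?_, ?_⟩
      · by_cases hm : m = K <;> simp [hm, hε m]
      · rw [Finset.sum_range_succ, Finset.sum_range_succ]
        have : ∑ k ∈ Finset.range K, (if k = K then (1:𝕜) else ε k) • h k = s := by
          apply Finset.sum_congr rfl; intro k hk'
          simp [Finset.mem_range.mp hk' |>.ne]
        rw [this]; simp only [if_pos rfl, if_true, eq_self_iff_true, one_smul]
        calc ∑ k ∈ Finset.range K, ‖h k‖ ^ 2 + ‖h K‖ ^ 2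
            ≤ ‖s‖ ^ 2 + ‖h K‖ ^ 2 := by linarith
          _ ≤ ‖s + h K‖ ^ 2 := hk
    · refine ⟨fun m => if m = K then -1 else ε m, fun m => ?_, ?_⟩
      · by_cases hm : m = K <;> simp [hm, hε m]
      · rw [Finset.sum_range_succ, Finset.sum_range_succ]
        have : ∑ k ∈ Finset.range K, (if k = K then (-1:𝕜) else ε k) • h k = s := by
          apply Finset.sum_congr rfl; intro k hk'
          simp [Finset.mem_range.mp hk' |>.ne]
        rw [this]; simp only [if_pos rfl, if_true, eq_self_iff_true, neg_one_smul]
        calc ∑ k ∈ Finset.range K, ‖h k‖ ^ 2 + ‖h K‖ ^ 2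
            ≤ ‖s‖ ^ 2 + ‖h K‖ ^ 2 := by linarith
          _ ≤ ‖s + -h K‖ ^ 2 := by rwa [← sub_eq_add_neg]

/-- If all finite signed sums of the sequence `(g_m)` have norm at most `C`,
then the partial sums `Σ_{m=0}^{N} g_m` form a Cauchy sequence, i.e. the series
`Σ_m g_m` converges in `H`. -/
theorem stmt_8 {𝕜 : Type*} [RCLike 𝕜] {H : Type*} [NormedAddCommGroup H]
    [InnerProductSpace 𝕜 H] [CompleteSpace H]
    (g : ℕ → H) (C : ℝ) (hC : 0 ≤ C)
    (hbound : ∀ (F : Finset ℕ) (ε : ℕ → 𝕜), (∀ m, ε m = 1 ∨ ε m = -1) →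
      ‖∑ m ∈ F, ε m • g m‖ ≤ C) :
    CauchySeq (fun N => ∑ m ∈ Finset.range (N + 1), g m) ∧
      ∃ S : H, Filter.Tendsto (fun N => ∑ m ∈ Finset.range (N + 1), g m)
        Filter.atTop (nhds S) := by
  set u : ℕ → H := fun N => ∑ m ∈ Finset.range (N + 1), g m with hu
  have hcauchy : CauchySeq u := by
    rw [Metric.cauchySeq_iff']
    by_contra hcon
    push_neg at hcon
    obtain ⟨δ, hδ, hbad⟩ := hcon
    -- Step 1: for every N there is n > N with ‖∑_{m ∈ Ioc N n} g m‖ ≥ δ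
    have hstep : ∀ N : ℕ, ∃ n : ℕ, N < n ∧ δ ≤ ‖∑ m ∈ Finset.Ioc N n, g m‖ := by
      intro N
      obtain ⟨n, hn, hd⟩ := hbad N
      have hne : N < n := by
        rcases lt_or_eq_of_le hn with h' | h'
        · exact h'
        · exfalso; rw [h'] at hd; simp at hd; linarith
      refine ⟨n, hne, ?_⟩
      have hadd : u N + ∑ m ∈ Finset.Ioc N n, g m = u n := by
        simp only [hu]
        rw [Finset.range_eq_Ico, ← Finset.Ico_add_one_add_one_eq_Ioc]
        rw [Finset.range_eq_Ico]
        exact Finset.sum_Ico_consecutive g (Nat.zero_le _) (Nat.succ_le_succ hn)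
      have hsub : ∑ m ∈ Finset.Ioc N n, g m = u n - u N := by
        rw [← hadd]; abel
      rw [hsub]
      rwa [dist_eq_norm] at hd
    choose f hf1 hf2 using hstep
    -- Step 2: blocks
    set a : ℕ → ℕ := fun k => f^[k] 0 with ha
    have hak : ∀ k, a (k + 1) = f (a k) := fun k => Function.iterate_succ_apply' f k 0
    have hmono : StrictMono a := strictMono_nat_of_lt_succ (fun k => by
      rw [hak]; exact hf1 _)
    set h : ℕ → H := fun k => ∑ m ∈ Finset.Ioc (a k) (a (k + 1)), g m with hh
    have hhδ : ∀ k, δ ≤ ‖h k‖ := fun k => by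
      simp only [hh, hak]; exact hf2 _
    -- Step 3: pick K large
    obtain ⟨K, hK⟩ := exists_nat_gt (C ^ 2 / δ ^ 2)
    have hKδ : C ^ 2 < (K : ℝ) * δ ^ 2 := by
      rw [div_lt_iff₀ (by positivity)] at hK; linarith
    -- Step 4: signs
    obtain ⟨ε', hε', hle⟩ := sign_lemma (𝕜 := 𝕜) K h
    set ε : ℕ → 𝕜 := fun m => ε' (Nat.findGreatest (fun k => a k < m) K) with hε
    have hεpm : ∀ m, ε m = 1 ∨ ε m = -1 := fun m => hε' _
    -- decomposition of Ioc (a 0) (a K) into consecutive blocks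
    have decomp : ∀ (φ : ℕ → H) (K' : ℕ),
        ∑ m ∈ Finset.Ioc (a 0) (a K'), φ m
          = ∑ k ∈ Finset.range K', ∑ m ∈ Finset.Ioc (a k) (a (k + 1)), φ m := by
      intro φ K'
      induction K' with
      | zero => simp
      | succ K' ih =>
        rw [Finset.sum_range_succ, ← ih,
          Finset.sum_Ioc_consecutive φ (hmono.monotone (Nat.zero_le K'))
            (hmono.monotone (Nat.le_succ K'))]
    -- ε is constant (= ε' k) on the k-th block
    have hεconst : ∀ k, k < K → ∀ m ∈ Finset.Ioc (a k) (a (k + 1)), ε m = ε' k := by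
      intro k hkK m hm
      rw [Finset.mem_Ioc] at hm
      have : Nat.findGreatest (fun j => a j < m) K = k := by
        rw [Nat.findGreatest_eq_iff]
        refine ⟨hkK.le, fun _ => hm.1, fun j hkj hjK hj => ?_⟩
        exact absurd hj (not_lt.mpr (le_trans hm.2 (hmono.monotone hkj)))
      simp only [hε, this]
    have hsum : ∑ m ∈ Finset.Ioc (a 0) (a K), ε m • g m
        = ∑ k ∈ Finset.range K, ε' k • h k := by
      rw [decomp (fun m => ε m • g m) K]
      apply Finset.sum_congr rfl
      intro k hk
      rw [Finset.mem_range] at hk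
      rw [show (ε' k • h k) = ∑ m ∈ Finset.Ioc (a k) (a (k + 1)), ε' k • g m by
        rw [← Finset.smul_sum]]
      exact Finset.sum_congr rfl (fun m hm => by rw [hεconst k hk m hm])
    -- Step 5: contradiction
    have h1 : ‖∑ k ∈ Finset.range K, ε' k • h k‖ ≤ C := by
      rw [← hsum]; exact hbound _ ε hεpm
    have h2 : ‖∑ k ∈ Finset.range K, ε' k • h k‖ ^ 2 ≤ C ^ 2 :=
      pow_le_pow_left₀ (norm_nonneg _) h1 2
    have h3 : (K : ℝ) * δ ^ 2 ≤ ∑ k ∈ Finset.range K, ‖h k‖ ^ 2 := by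
      calc (K : ℝ) * δ ^ 2 = ∑ _k ∈ Finset.range K, δ ^ 2 := by
            rw [Finset.sum_const, Finset.card_range, nsmul_eq_mul]
        _ ≤ ∑ k ∈ Finset.range K, ‖h k‖ ^ 2 :=
            Finset.sum_le_sum (fun k _ => pow_le_pow_left₀ hδ.le (hhδ k) 2)
    linarith
  refine ⟨hcauchy, ?_⟩
  obtain ⟨S, hS⟩ := cauchySeq_tendsto_of_complete hcauchy
  exact ⟨S, hS⟩
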